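/- Let (R,B,L) be a dual iteration system with compatibility condition (R^n b·l ∈ ℤ for all n ≥ 1, b ∈ B, l ∈ L) and Hadamard condition, with 0 ∈ L and 0 ∈ B. Then for any two distinct elements λ, λ' ∈ ℒ = {Σ_{k=0}^n (R*)^k l_k : l_k ∈ L}, the Fourier transform of the self-similar measure μ vanishes at their difference: μ̂(λ − λ') = 0. -/

import Mathlib

open MeasureTheory Matrix Real ENNReal

noncomputable section

variable {d : ℕ}

abbrev E (d : ℕ) := EuclideanSpace ℝ (Fin d)

/-- A real matrix is expansive if all its (complex) eigenvalues have modulus `> 1`. -/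
def IsExpansive (R : Matrix (Fin d) (Fin d) ℝ) : Prop :=
  ∀ z ∈ spectrum ℂ (R.map (Complex.ofReal)), 1 < ‖z‖

/-- The exponential `e_λ(x) = e^{2πi λ·x}`. -/
def eexp (lam x : E d) : ℂ := Complex.exp (2 * π * Complex.I * (inner ℝ lam x : ℝ))

/-- `χ_B(t) = N⁻¹ ∑_{b∈B} e^{2πi b·t}`. -/
def chiB (B : Finset (E d)) (t : E d) : ℂ := (B.card : ℂ)⁻¹ * ∑ b ∈ B, eexp b t

/-- The Fourier transform `μ̂(t) = ∫ e^{-2πi t·x} dμ(x)`. -/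
def muHat (μ : Measure (E d)) (t : E d) : ℂ := ∫ x, (starRingEnd ℂ) (eexp t x) ∂μ

/-- `μ` is the self-similar probability measure of the system `(R, B)`:
`μ = N⁻¹ ∑_{b∈B} μ ∘ σ_b⁻¹` with `σ_b(x) = R⁻¹ x + b`. -/
def IsSelfSimilarMeasure (R : Matrix (Fin d) (Fin d) ℝ) (B : Finset (E d))
    (μ : Measure (E d)) : Prop :=
  IsProbabilityMeasure μ ∧
    μ = (B.card : ℝ≥0∞)⁻¹ •
      ∑ b ∈ B, μ.map (fun (x : E d) => (show E d from WithLp.toLp 2 (R⁻¹.mulVec x)) + b)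

/-- The compatibility condition `R^n b · l ∈ ℤ` for all `n ≥ 1`, `b ∈ B`, `l ∈ L`. -/
def Compatible (R : Matrix (Fin d) (Fin d) ℝ) (B L : Finset (E d)) : Prop :=
  ∀ n : ℕ, 1 ≤ n → ∀ b ∈ B, ∀ l ∈ L,
    ∃ m : ℤ, (inner ℝ (show E d from WithLp.toLp 2 ((R ^ n).mulVec b)) l : ℝ) = (m : ℝ)

/-- The Hadamard condition: `N^{-1/2} (e^{2πi b·l})_{b∈B, l∈L}` is a unitary matrix. -/
def Hadamard (B L : Finset (E d)) : Prop :=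
  letI : DecidableEq (E d) := Classical.decEq _
  let H : Matrix B L ℂ :=
    fun b l => ((Real.sqrt B.card : ℝ) : ℂ)⁻¹ * eexp (b : E d) (l : E d)
  B.card = L.card ∧ H * H.conjTranspose = 1 ∧ H.conjTranspose * H = 1

/-- The dual lattice-like set `ℒ = {∑_{k=0}^n (R*)^k l_k : n ∈ ℕ, l_k ∈ L}`. -/
def LSet (R : Matrix (Fin d) (Fin d) ℝ) (L : Finset (E d)) : Set (E d) :=
  {t | ∃ n : ℕ, ∃ l : ℕ → E d, (∀ k, l k ∈ L) ∧
    t = ∑ k ∈ Finset.range (n + 1), (show E d from WithLp.toLp 2 ((Rᵀ ^ k).mulVec (l k)))}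

/-- The Ruelle transfer operator `(Cq)(t) = ∑_{l∈L} |χ_B(t−l)|² q((R*)⁻¹(t−l))`. -/
def ruelle (R : Matrix (Fin d) (Fin d) ℝ) (B L : Finset (E d))
    (q : E d → ℝ) (t : E d) : ℝ :=
  ∑ l ∈ L, ‖chiB B (t - l)‖ ^ 2 *
    q (show E d from WithLp.toLp 2 ((Rᵀ)⁻¹.mulVec (t - l)))

/-- `Q(t) = ∑_{λ∈ℒ} |μ̂(t−λ)|²`. -/
def Qfun (R : Matrix (Fin d) (Fin d) ℝ) (L : Finset (E d))
    (μ : Measure (E d)) (t : E d) : ℝ :=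
  ∑' lam : LSet R L, ‖muHat μ (t - lam)‖ ^ 2

/-- The attractor `X_ρ = {∑_{k=0}^∞ −(R*)^{-k} l_k : l_k ∈ L}`. -/
def attractorRho (R : Matrix (Fin d) (Fin d) ℝ) (L : Finset (E d)) : Set (E d) :=
  {x | ∃ l : ℕ → E d, (∀ k, l k ∈ L) ∧
    HasSum (fun k => -(show E d from WithLp.toLp 2 (((Rᵀ)⁻¹ ^ k).mulVec (l k)))) x}

/-- The Lipschitz-type norm `‖q‖_{Y,∞} = sup_{y∈Y} |∇q(y)|₂`. -/
def YNorm (Y : Set (E d)) (q : E d → ℝ) : ℝ :=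
  sSup ((fun y => ‖gradient q y‖) '' Y)


lemma inner_mulVec_right (M : Matrix (Fin d) (Fin d) ℝ) (x y : E d) :
    (inner ℝ x (show E d from WithLp.toLp 2 (M.mulVec y)) : ℝ) = inner ℝ (show E d from WithLp.toLp 2 (Mᵀ.mulVec x)) y := by
  simp only [PiLp.inner_apply, RCLike.inner_apply, conj_trivial, Matrix.mulVec,
    dotProduct, Matrix.transpose_apply, Finset.mul_sum, Finset.sum_mul]
  rw [Finset.sum_comm]
  refine Finset.sum_congr rfl fun i _ => Finset.sum_congr rfl fun j _ => by ring

lemma eexp_add_right (t x y : E d) : eexp t (x + y) = eexp t x * eexp t y := by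
  simp [eexp, inner_add_right, Complex.ofReal_add, mul_add, Complex.exp_add]

lemma eexp_int (t x : E d) (m : ℤ) (h : (inner ℝ t x : ℝ) = m) : eexp t x = 1 := by
  rw [eexp, h]
  push_cast
  rw [show 2 * (π:ℂ) * Complex.I * m = m * (2 * π * Complex.I) by ring]
  exact Complex.exp_int_mul_two_pi_mul_I m

lemma eexp_mulVec (M : Matrix (Fin d) (Fin d) ℝ) (t x : E d) :
    eexp t (show E d from WithLp.toLp 2 (M.mulVec x)) = eexp (show E d from WithLp.toLp 2 (Mᵀ.mulVec t)) x := by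
  rw [eexp, eexp, inner_mulVec_right]

lemma eexp_comm (a b : E d) : eexp a b = eexp b a := by
  rw [eexp, eexp, real_inner_comm]

def mulVecL (M : Matrix (Fin d) (Fin d) ℝ) : E d →ₗ[ℝ] E d where
  toFun := fun x => show E d from WithLp.toLp 2 (M.mulVec x)
  map_add' := fun x y => by
    ext i
    simp only [PiLp.add_apply]
    simp [Matrix.mulVec, dotProduct, PiLp.add_apply, mul_add, Finset.sum_add_distrib]
  map_smul' := fun c x => by
    ext i
    simp only [PiLp.smul_apply, smul_eq_mul, RingHom.id_apply]
    simp [Matrix.mulVec, dotProduct, PiLp.smul_apply, Finset.mul_sum, mul_left_comm,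
      smul_eq_mul]

lemma continuous_mulVecE (M : Matrix (Fin d) (Fin d) ℝ) :
    Continuous (fun x : E d => (show E d from WithLp.toLp 2 (M.mulVec x))) :=
  (mulVecL M).continuous_of_finiteDimensional

lemma norm_eexp (t x : E d) : ‖eexp t x‖ = 1 := by
  rw [eexp, show (2 * (π:ℂ) * Complex.I * ((inner ℝ t x : ℝ) : ℂ))
      = ((2 * π * (inner ℝ t x : ℝ) : ℝ) : ℂ) * Complex.I by push_cast; ring]
  exact Complex.norm_exp_ofReal_mul_I _

lemma continuous_eexp (t : E d) : Continuous (fun x : E d => eexp t x) := by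
  have h : Continuous fun x : E d => (inner ℝ t x : ℝ) := continuous_const.inner continuous_id
  exact Complex.continuous_exp.comp (continuous_const.mul (Complex.continuous_ofReal.comp h))

lemma integrable_conj_eexp (s : E d) (ν : Measure (E d)) [IsFiniteMeasure ν] :
    Integrable (fun x => (starRingEnd ℂ) (eexp s x)) ν := by
  refine (integrable_const (1 : ℝ)).mono' ?_ ?_
  · exact (Complex.continuous_conj.comp (continuous_eexp s)).aestronglyMeasurable
  · exact Filter.Eventually.of_forall fun x => by rw [RCLike.norm_conj, norm_eexp]

lemma continuous_conj_eexp (s : E d) :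
    Continuous fun x : E d => (starRingEnd ℂ) (eexp s x) :=
  Complex.continuous_conj.comp (continuous_eexp s)

lemma muHat_rec (R : Matrix (Fin d) (Fin d) ℝ) (B : Finset (E d)) (μ : Measure (E d))
    (hprob : IsProbabilityMeasure μ)
    (hrec : μ = (B.card : ℝ≥0∞)⁻¹ •
      ∑ b ∈ B, μ.map (fun (x : E d) => (show E d from WithLp.toLp 2 (R⁻¹.mulVec x)) + b)) (t : E d) :
    muHat μ t = (starRingEnd ℂ) (chiB B t) *
      muHat μ (show E d from WithLp.toLp 2 ((Rᵀ)⁻¹.mulVec t)) := by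
  have hσm : ∀ b : E d, AEMeasurable (fun x : E d => (show E d from WithLp.toLp 2 (R⁻¹.mulVec x)) + b) μ :=
    fun b => (((continuous_mulVecE R⁻¹).add continuous_const).measurable).aemeasurable
  have hmapP : ∀ b : E d, IsProbabilityMeasure
      (μ.map (fun x : E d => (show E d from WithLp.toLp 2 (R⁻¹.mulVec x)) + b)) :=
    fun b => Measure.isProbabilityMeasure_map (hσm b)
  have key : ∀ b ∈ B, ∫ x, (starRingEnd ℂ) (eexp t x)
      ∂(μ.map (fun x : E d => (show E d from WithLp.toLp 2 (R⁻¹.mulVec x)) + b))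
      = (starRingEnd ℂ) (eexp t b) * muHat μ (show E d from WithLp.toLp 2 ((Rᵀ)⁻¹.mulVec t)) := by
    intro b _
    rw [integral_map (hσm b) (continuous_conj_eexp t).aestronglyMeasurable]
    have hpt : ∀ x : E d, (starRingEnd ℂ) (eexp t ((show E d from WithLp.toLp 2 (R⁻¹.mulVec x)) + b))
        = (starRingEnd ℂ) (eexp t b) *
          (starRingEnd ℂ) (eexp (show E d from WithLp.toLp 2 ((Rᵀ)⁻¹.mulVec t)) x) := by
      intro x
      rw [eexp_add_right, _root_.map_mul, eexp_mulVec, Matrix.transpose_nonsing_inv]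
      ring
    simp_rw [hpt]
    rw [integral_const_mul, muHat]
  have hS : (∑ b ∈ B, ∫ x, (starRingEnd ℂ) (eexp t x)
        ∂(μ.map (fun x : E d => (show E d from WithLp.toLp 2 (R⁻¹.mulVec x)) + b)))
      = (∑ b ∈ B, (starRingEnd ℂ) (eexp t b)) *
        muHat μ (show E d from WithLp.toLp 2 ((Rᵀ)⁻¹.mulVec t)) :=
    (Finset.sum_congr rfl key).trans (Finset.sum_mul _ _ _).symm
  have hC : (starRingEnd ℂ) (chiB B t)
      = ((B.card : ℂ))⁻¹ * ∑ b ∈ B, (starRingEnd ℂ) (eexp t b) := by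
    rw [chiB, _root_.map_mul, map_sum, map_inv₀]
    congr 1
    · simp
    · exact Finset.sum_congr rfl fun b _ => by rw [eexp_comm b t]
  conv_lhs => rw [muHat, hrec]
  rw [integral_smul_measure, integral_finset_sum_measure
    (fun b hb => haveI := hmapP b; integrable_conj_eexp t _)]
  refine (congrArg (fun z => ((B.card : ℝ≥0∞)⁻¹.toReal) • z) hS).trans ?_
  rw [hC]
  simp only [ENNReal.toReal_inv, ENNReal.toReal_natCast, Complex.real_smul, Complex.ofReal_inv,
    Complex.ofReal_natCast]
  ring

lemma abs_eexp (t x : E d) : ‖eexp t x‖ = 1 := by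
  rw [norm_eexp]

lemma conj_eexp_mul (b l l' : E d) :
    (starRingEnd ℂ) (eexp b l) * eexp b l' = eexp b (l' - l) := by
  have h1 : eexp b l' = eexp b (l' - l) * eexp b l := by
    rw [← eexp_add_right, sub_add_cancel]
  have h2 : (starRingEnd ℂ) (eexp b l) * eexp b l = 1 := by
    rw [mul_comm, Complex.mul_conj, Complex.normSq_eq_norm_sq, abs_eexp]
    norm_num
  calc (starRingEnd ℂ) (eexp b l) * eexp b l'
      = eexp b (l' - l) * ((starRingEnd ℂ) (eexp b l) * eexp b l) := by rw [h1]; ring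
    _ = eexp b (l' - l) := by rw [h2, mul_one]

lemma chiB_sub_zero (B L : Finset (E d)) (hHad : Hadamard B L) (h0B : (0 : E d) ∈ B)
    {l l' : E d} (hl : l ∈ L) (hl' : l' ∈ L) (hne : l ≠ l') :
    chiB B (l' - l) = 0 := by
  classical
  obtain ⟨hcard, -, h2⟩ := hHad
  have hNpos : 0 < B.card := Finset.card_pos.mpr ⟨0, h0B⟩
  have hentry := congrFun (congrFun h2 (⟨l, hl⟩ : L)) (⟨l', hl'⟩ : L)
  replace hentry : ∑ j : B, (Matrix.conjTranspose (fun (b : B) (l : L) =>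
      ((Real.sqrt B.card : ℝ) : ℂ)⁻¹ * eexp (b : E d) (l : E d))) ⟨l, hl⟩ j *
      (fun (b : B) (l : L) => ((Real.sqrt B.card : ℝ) : ℂ)⁻¹ * eexp (b : E d) (l : E d)) j ⟨l', hl'⟩
      = (1 : Matrix L L ℂ) ⟨l, hl⟩ ⟨l', hl'⟩ := by
    convert hentry using 1
    · rfl
    · simp [Matrix.one_apply, hne]
  have hone : (1 : Matrix L L ℂ) (⟨l, hl⟩ : L) (⟨l', hl'⟩ : L) = 0 := by
    apply Matrix.one_apply_ne
    exact fun h => hne (congrArg Subtype.val h)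
  rw [hone] at hentry
  have hterm : ∀ b : (B : Finset (E d)),
      (Matrix.conjTranspose (fun (b : B) (l : L) =>
          ((Real.sqrt B.card : ℝ) : ℂ)⁻¹ * eexp (b : E d) (l : E d)))
        (⟨l, hl⟩ : L) b *
        (fun (b : B) (l : L) => ((Real.sqrt B.card : ℝ) : ℂ)⁻¹ * eexp (b : E d) (l : E d))
          b (⟨l', hl'⟩ : L)
      = (((Real.sqrt B.card : ℝ) : ℂ)⁻¹)^2 * eexp (b : E d) (l' - l) := by
    intro b
    show star (((Real.sqrt B.card : ℝ) : ℂ)⁻¹ * eexp (b : E d) l) *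
      (((Real.sqrt B.card : ℝ) : ℂ)⁻¹ * eexp (b : E d) l') = _
    rw [RCLike.star_def]
    rw [show (starRingEnd ℂ) (((Real.sqrt B.card : ℝ) : ℂ)⁻¹ * eexp (b : E d) l)
        = ((Real.sqrt B.card : ℝ) : ℂ)⁻¹ * (starRingEnd ℂ) (eexp (b : E d) l) by
      rw [_root_.map_mul, map_inv₀, Complex.conj_ofReal]]
    rw [show ((Real.sqrt B.card : ℝ) : ℂ)⁻¹ * (starRingEnd ℂ) (eexp (b : E d) l) *
        (((Real.sqrt B.card : ℝ) : ℂ)⁻¹ * eexp (b : E d) l')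
        = (((Real.sqrt B.card : ℝ) : ℂ)⁻¹)^2 *
          ((starRingEnd ℂ) (eexp (b : E d) l) * eexp (b : E d) l') by ring]
    rw [conj_eexp_mul]
  rw [Finset.sum_congr rfl (fun b _ => hterm b), ← Finset.mul_sum] at hentry
  have hsqrt : (((Real.sqrt B.card : ℝ) : ℂ)⁻¹)^2 ≠ 0 := by
    apply pow_ne_zero
    rw [ne_eq, inv_eq_zero, Complex.ofReal_eq_zero]
    exact Real.sqrt_ne_zero'.mpr (by exact_mod_cast hNpos)
  have hsum : (∑ b : (B : Finset (E d)), eexp (b : E d) (l' - l)) = 0 :=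
    (mul_eq_zero.mp hentry).resolve_left hsqrt
  rw [chiB]
  rw [show (∑ b ∈ B, eexp b (l' - l)) = 0 by
    rw [← hsum]; exact (Finset.sum_coe_sort B (fun b => eexp b (l' - l))).symm]
  rw [mul_zero]

lemma chiB_add_int (B : Finset (E d)) (v w : E d)
    (h : ∀ b ∈ B, ∃ m : ℤ, (inner ℝ b w : ℝ) = m) : chiB B (v + w) = chiB B v := by
  unfold chiB
  congr 1
  refine Finset.sum_congr rfl fun b hb => ?_
  obtain ⟨m, hm⟩ := h b hb
  rw [eexp_add_right, eexp_int b w m hm, mul_one]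

lemma det_ne_zero_of_expansive (R : Matrix (Fin d) (Fin d) ℝ) (hR : IsExpansive R) :
    R.det ≠ 0 := by
  intro h
  have hdet : (R.map Complex.ofReal).det = 0 := by
    have h2 : R.map Complex.ofReal = Complex.ofRealHom.mapMatrix R := rfl
    rw [h2, ← RingHom.map_det, h]
    simp
  have h0 : (0 : ℂ) ∈ spectrum ℂ (R.map Complex.ofReal) := by
    rw [spectrum.zero_mem_iff, Matrix.isUnit_iff_isUnit_det, hdet]
    simp
  have h1 := hR 0 h0
  rw [norm_zero] at h1
  exact absurd h1 (by norm_num)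

lemma mulVecL_apply (M : Matrix (Fin d) (Fin d) ℝ) (x : E d) :
    mulVecL M x = (show E d from WithLp.toLp 2 (M.mulVec x)) := rfl

lemma mulVecE_zero (M : Matrix (Fin d) (Fin d) ℝ) :
    (show E d from WithLp.toLp 2 (M.mulVec (0 : E d))) = 0 := by
  rw [← mulVecL_apply, map_zero]

lemma mulVecE_sub (M : Matrix (Fin d) (Fin d) ℝ) (x y : E d) :
    (show E d from WithLp.toLp 2 (M.mulVec (x - y)))
      = (show E d from WithLp.toLp 2 (M.mulVec x)) - (show E d from WithLp.toLp 2 (M.mulVec y)) := by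
  exact map_sub (mulVecL M) x y

lemma inv_mulVec_mulVec (R : Matrix (Fin d) (Fin d) ℝ) (hdet : IsUnit Rᵀ.det) (s : E d) :
    (show E d from WithLp.toLp 2 ((Rᵀ)⁻¹.mulVec (show E d from WithLp.toLp 2 (Rᵀ.mulVec s)))) = s := by
  show WithLp.toLp 2 ((Rᵀ)⁻¹ *ᵥ (Rᵀ *ᵥ s.ofLp)) = s
  rw [Matrix.mulVec_mulVec, Matrix.nonsing_inv_mul _ hdet, Matrix.one_mulVec]

lemma step0 (R : Matrix (Fin d) (Fin d) ℝ) (B L : Finset (E d))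
    (hcomp : Compatible R B L) (hHad : Hadamard B L) (h0B : (0 : E d) ∈ B)
    (μ : Measure (E d)) (hμ : IsSelfSimilarMeasure R B μ)
    (u v : ℕ → E d) (hu : ∀ k, u k ∈ L) (hv : ∀ k, v k ∈ L)
    (hne : u 0 ≠ v 0) (m : ℕ) :
    muHat μ (∑ k ∈ Finset.range (m+1), (show E d from WithLp.toLp 2 ((Rᵀ ^ k).mulVec (u k - v k)))) = 0 := by
  set t := ∑ k ∈ Finset.range (m+1), (show E d from WithLp.toLp 2 ((Rᵀ ^ k).mulVec (u k - v k))) with ht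
  have hsplit : t = (u 0 - v 0) +
      ∑ k ∈ Finset.range m, (show E d from WithLp.toLp 2 ((Rᵀ ^ (k+1)).mulVec (u (k+1) - v (k+1)))) := by
    rw [ht, Finset.sum_range_succ', add_comm]
    congr 1
    show (show E d from WithLp.toLp 2 ((Rᵀ ^ 0).mulVec (u 0 - v 0))) = u 0 - v 0
    rw [pow_zero]
    show WithLp.toLp 2 ((1 : Matrix (Fin d) (Fin d) ℝ) *ᵥ ((u 0).ofLp - (v 0).ofLp)) = u 0 - v 0
    exact (congrArg (WithLp.toLp 2) (Matrix.one_mulVec _)).trans rfl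
  have hint : ∀ b ∈ B, ∃ z : ℤ, (inner ℝ b
      (∑ k ∈ Finset.range m, (show E d from WithLp.toLp 2 ((Rᵀ ^ (k+1)).mulVec (u (k+1) - v (k+1))))) : ℝ)
      = z := by
    intro b hb
    have hterm : ∀ k : ℕ, ∃ z : ℤ,
        (inner ℝ b (show E d from WithLp.toLp 2 ((Rᵀ ^ (k+1)).mulVec (u (k+1) - v (k+1)))) : ℝ) = z := by
      intro k
      obtain ⟨m1, hm1⟩ := hcomp (k+1) (Nat.succ_le_succ (Nat.zero_le _)) b hb (u (k+1)) (hu _)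
      obtain ⟨m2, hm2⟩ := hcomp (k+1) (Nat.succ_le_succ (Nat.zero_le _)) b hb (v (k+1)) (hv _)
      refine ⟨m1 - m2, ?_⟩
      rw [inner_mulVec_right]
      rw [show ((Rᵀ ^ (k+1))ᵀ : Matrix (Fin d) (Fin d) ℝ) = R ^ (k+1) by
        rw [Matrix.transpose_pow, Matrix.transpose_transpose]]
      rw [show (WithLp.toLp 2 ((u (k+1)).ofLp - (v (k+1)).ofLp) : E d) = u (k+1) - v (k+1) from rfl]
      rw [inner_sub_right, hm1, hm2]
      push_cast
      ring
    choose z hz using hterm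
    refine ⟨∑ k ∈ Finset.range m, z k, ?_⟩
    rw [inner_sum, Finset.sum_congr rfl (fun k _ => hz k)]
    push_cast
    ring
  have hchi : chiB B t = 0 := by
    rw [hsplit, chiB_add_int B _ _ hint]
    exact chiB_sub_zero B L hHad h0B (hv 0) (hu 0) (fun h => hne h.symm)
  rw [muHat_rec R B μ hμ.1 hμ.2 t, hchi, map_zero, zero_mul]

lemma muHat_zero_aux (R : Matrix (Fin d) (Fin d) ℝ) (B L : Finset (E d))
    (hdet : IsUnit Rᵀ.det)
    (hcomp : Compatible R B L) (hHad : Hadamard B L) (h0B : (0 : E d) ∈ B)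
    (μ : Measure (E d)) (hμ : IsSelfSimilarMeasure R B μ) :
    ∀ m : ℕ, ∀ u v : ℕ → E d, (∀ k, u k ∈ L) → (∀ k, v k ∈ L) →
      (∃ k, k ≤ m ∧ u k ≠ v k) →
      muHat μ (∑ k ∈ Finset.range (m+1), (show E d from WithLp.toLp 2 ((Rᵀ ^ k).mulVec (u k - v k)))) = 0 := by
  intro m
  induction m with
  | zero =>
    rintro u v hu hv ⟨k, hk, hne⟩
    interval_cases k
    exact step0 R B L hcomp hHad h0B μ hμ u v hu hv hne 0
  | succ m ih =>
    rintro u v hu hv ⟨k, hk, hne⟩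
    by_cases h0 : u 0 = v 0
    · set s := ∑ k ∈ Finset.range (m+1),
        (show E d from WithLp.toLp 2 ((Rᵀ ^ k).mulVec (u (k+1) - v (k+1)))) with hs
      have hts : (∑ k ∈ Finset.range (m+2), (show E d from WithLp.toLp 2 ((Rᵀ ^ k).mulVec (u k - v k))))
          = (show E d from WithLp.toLp 2 (Rᵀ.mulVec s)) := by
        rw [Finset.sum_range_succ']
        rw [show (show E d from WithLp.toLp 2 ((Rᵀ ^ 0).mulVec (u 0 - v 0))) = 0 by
          rw [show (u 0).ofLp - (v 0).ofLp = (0 : E d).ofLp by simp [h0]]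
          exact mulVecE_zero _]
        rw [add_zero, hs, ← mulVecL_apply, map_sum]
        refine Finset.sum_congr rfl fun k _ => ?_
        rw [mulVecL_apply]
        show WithLp.toLp 2 ((Rᵀ ^ (k+1)) *ᵥ ((u (k+1)).ofLp - (v (k+1)).ofLp))
          = WithLp.toLp 2 (Rᵀ *ᵥ ((Rᵀ ^ k) *ᵥ ((u (k+1)).ofLp - (v (k+1)).ofLp)))
        rw [Matrix.mulVec_mulVec, ← pow_succ']
      rw [hts, muHat_rec R B μ hμ.1 hμ.2, inv_mulVec_mulVec R hdet s, hs]
      have : muHat μ (∑ k ∈ Finset.range (m+1),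
          (show E d from WithLp.toLp 2 ((Rᵀ ^ k).mulVec (u (k+1) - v (k+1))))) = 0 := by
        apply ih (fun k => u (k+1)) (fun k => v (k+1)) (fun k => hu _) (fun k => hv _)
        obtain ⟨j, hj⟩ : ∃ j, k = j + 1 := by
          cases k with
          | zero => exact absurd h0 hne
          | succ j => exact ⟨j, rfl⟩
        exact ⟨j, by omega, by rw [hj] at hne; exact hne⟩
      rw [this, mul_zero]
    · exact step0 R B L hcomp hHad h0B μ hμ u v hu hv h0 (m+1)

/-- For a dual iteration system `(R,B,L)` with compatibility and Hadamard conditions,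
`0 ∈ L`, `0 ∈ B`, the Fourier transform of the self-similar measure vanishes on
differences of distinct elements of `ℒ`. -/
theorem muHat_vanishes_on_differences
    (R : Matrix (Fin d) (Fin d) ℝ) (hR : IsExpansive R)
    (B L : Finset (E d)) (hN : B.card = L.card)
    (hcomp : Compatible R B L) (hHad : Hadamard B L)
    (h0L : (0 : E d) ∈ L) (h0B : (0 : E d) ∈ B)
    (μ : Measure (E d)) (hμ : IsSelfSimilarMeasure R B μ) :
    ∀ lam ∈ LSet R L, ∀ lam' ∈ LSet R L, lam ≠ lam' →
      muHat μ (lam - lam') = 0 := by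
  rintro lam ⟨n, l, hl, rfl⟩ lam' ⟨n', l', hl', rfl⟩ hne
  have hdet : IsUnit Rᵀ.det := by
    rw [Matrix.det_transpose]
    exact isUnit_iff_ne_zero.mpr (det_ne_zero_of_expansive R hR)
  set m := max n n' with hm
  set u : ℕ → E d := fun k => if k ≤ n then l k else 0 with hu_def
  set v : ℕ → E d := fun k => if k ≤ n' then l' k else 0 with hv_def
  have hu : ∀ k, u k ∈ L := fun k => by
    by_cases h : k ≤ n <;> simp [hu_def, h, hl k, h0L]
  have hv : ∀ k, v k ∈ L := fun k => by
    by_cases h : k ≤ n' <;> simp [hv_def, h, hl' k, h0L]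
  have hugen : (∑ k ∈ Finset.range (n + 1), (show E d from WithLp.toLp 2 ((Rᵀ ^ k).mulVec (l k))))
      = ∑ k ∈ Finset.range (m + 1), (show E d from WithLp.toLp 2 ((Rᵀ ^ k).mulVec (u k))) := by
    rw [Finset.sum_congr rfl (fun k hk =>
      congrArg (fun (w : E d) => show E d from WithLp.toLp 2 ((Rᵀ ^ k).mulVec w))
        (show l k = u k by
          simp [hu_def, Nat.lt_succ_iff.mp (Finset.mem_range.mp hk)]))]
    refine Finset.sum_subset (Finset.range_subset_range.mpr (by omega)) fun k _ hk2 => ?_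
    have hkn : ¬ k ≤ n := by
      simp only [Finset.mem_range] at hk2
      omega
    rw [show u k = 0 by simp [hu_def, hkn]]
    exact mulVecE_zero _
  have hvgen : (∑ k ∈ Finset.range (n' + 1), (show E d from WithLp.toLp 2 ((Rᵀ ^ k).mulVec (l' k))))
      = ∑ k ∈ Finset.range (m + 1), (show E d from WithLp.toLp 2 ((Rᵀ ^ k).mulVec (v k))) := by
    rw [Finset.sum_congr rfl (fun k hk =>
      congrArg (fun (w : E d) => show E d from WithLp.toLp 2 ((Rᵀ ^ k).mulVec w))
        (show l' k = v k by
          simp [hv_def, Nat.lt_succ_iff.mp (Finset.mem_range.mp hk)]))]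
    refine Finset.sum_subset (Finset.range_subset_range.mpr (by omega)) fun k _ hk2 => ?_
    have hkn : ¬ k ≤ n' := by
      simp only [Finset.mem_range] at hk2
      omega
    rw [show v k = 0 by simp [hv_def, hkn]]
    exact mulVecE_zero _
  have hdiff : (∑ k ∈ Finset.range (n + 1), (show E d from WithLp.toLp 2 ((Rᵀ ^ k).mulVec (l k))))
      - (∑ k ∈ Finset.range (n' + 1), (show E d from WithLp.toLp 2 ((Rᵀ ^ k).mulVec (l' k))))
      = ∑ k ∈ Finset.range (m + 1), (show E d from WithLp.toLp 2 ((Rᵀ ^ k).mulVec (u k - v k))) := by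
    rw [hugen, hvgen, ← Finset.sum_sub_distrib]
    exact Finset.sum_congr rfl fun k _ => (mulVecE_sub _ _ _).symm
  have hw : ∃ k, k ≤ m ∧ u k ≠ v k := by
    by_contra hc
    push_neg at hc
    apply hne
    rw [hugen, hvgen]
    refine Finset.sum_congr rfl fun k hk => ?_
    rw [hc k (Nat.lt_succ_iff.mp (Finset.mem_range.mp hk))]
  rw [hdiff]
  exact muHat_zero_aux R B L hdet hcomp hHad h0B μ hμ m u v hu hv hw

end
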